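/- arXiv:2205.10499 — 6 statements merged into one kernel-verified Lean document; each statement's English description precedes it below -/
import Mathlib

section
/- Suppose the capacity matrix C_max ∈ ℝ_{≥0}^{6×T} is block-constant in the sense that its first three rows are all equal and its last three rows are all equal. If (X*, A*) is an optimal solution of problem (P1), then for every 3×3 permutation matrix Π the pair (ΠX*, A*) is also feasible and optimal; moreover, if N ≥ 1 and Π is a cyclic 3-permutation, then ΠX* ≠ X*, so the set of optimal solutions of (P1) contains at least two distinct elements. -/
open Matrix Complex

/-- The complex unit `e^{iθπ/180}` at angle `θ` degrees. -/
noncomputable def ang (θ : ℝ) : ℂ := Complex.exp ((θ * Real.pi / 180) * Complex.I)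

/-- The matrix `Φ₁` transforming delta phase powers to primary-side line powers. -/
noncomputable def Phi1 : Matrix (Fin 3) (Fin 3) ℂ :=
  !![ang 30, 0, -ang 150;
     -ang 30, ang (-90), 0;
     0, -ang (-90), ang 150]

/-- The matrix `Φ₂` (with turning ratio `n_r`) transforming delta phase powers to
secondary-side line powers. -/
noncomputable def Phi2 (n_r : ℝ) : Matrix (Fin 3) (Fin 3) ℂ :=
  ((n_r : ℂ))⁻¹ • !![ang 30, ang (-90), -2 * ang 150;
     -2 * ang 30, ang (-90), ang 150;
     ang 30, -2 * ang (-90), ang 150]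

/-- `X ∈ 𝒳`: a binary `3 × N` matrix each of whose columns sums to `1`. -/
def memX {N : ℕ} (X : Matrix (Fin 3) (Fin N) ℝ) : Prop :=
  (∀ m i, X m i = 0 ∨ X m i = 1) ∧ ∀ i, (∑ m, X m i) = 1

/-- `A ∈ C_r`: the charger (maximum-rate) constraint. -/
def memCr {N T : ℕ} (r_max : ℝ) (E : Matrix (Fin N) (Fin T) ℝ)
    (A : Matrix (Fin N) (Fin T) ℝ) : Prop :=
  ∀ i j, 0 ≤ A i j ∧ A i j ≤ r_max * E i j

/-- `A ∈ C_d`: the energy-demand constraint. -/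
def memCd {N T : ℕ} (Δ : ℝ) (e : Fin N → ℝ) (A : Matrix (Fin N) (Fin T) ℝ) : Prop :=
  ∀ i, Δ * (∑ j, A i j) ≤ e i

/-- `(X, A) ∈ C_soc`: the network (transformer capacity) constraint. -/
def memCsoc {N T : ℕ} (n_r : ℝ) (Cmax : Matrix (Fin 6) (Fin T) ℝ)
    (X : Matrix (Fin 3) (Fin N) ℝ) (A : Matrix (Fin N) (Fin T) ℝ) : Prop :=
  ∀ (i : Fin 3) (j : Fin T),
    ‖(Phi1 * (X * A).map ((↑) : ℝ → ℂ)) i j‖ ≤ Cmax (Fin.castAdd 3 i) j ∧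
    ‖(Phi2 n_r * (X * A).map ((↑) : ℝ → ℂ)) i j‖ ≤ Cmax (Fin.addNat i 3) j

/-- The feasible set `S` of problem (P1). -/
def feasibleP1 {N T : ℕ} (r_max Δ n_r : ℝ) (E : Matrix (Fin N) (Fin T) ℝ)
    (e : Fin N → ℝ) (Cmax : Matrix (Fin 6) (Fin T) ℝ)
    (X : Matrix (Fin 3) (Fin N) ℝ) (A : Matrix (Fin N) (Fin T) ℝ) : Prop :=
  memX X ∧ memCr r_max E A ∧ memCd Δ e A ∧ memCsoc n_r Cmax X A

/-- The objective `f(A) = -∑_{i,j} A_{i,j}` of problem (P1). -/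
def objF {N T : ℕ} (A : Matrix (Fin N) (Fin T) ℝ) : ℝ := -∑ i, ∑ j, A i j

/-- Feasibility in the relaxed problem (P2) with `M = I_T` and `W = r_max · E`. -/
def feasibleP2 {N T : ℕ} (r_max n_r : ℝ) (E : Matrix (Fin N) (Fin T) ℝ)
    (Cmax : Matrix (Fin 6) (Fin T) ℝ)
    (X : Matrix (Fin 3) (Fin N) ℝ) (P : Matrix (Fin 3) (Fin T) ℝ) : Prop :=
  memX X ∧ (∀ m j, 0 ≤ P m j) ∧ (∀ m j, P m j ≤ r_max * (X * E) m j) ∧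
  ∀ (i : Fin 3) (j : Fin T),
    ‖(Phi1 * P.map ((↑) : ℝ → ℂ)) i j‖ ≤ Cmax (Fin.castAdd 3 i) j ∧
    ‖(Phi2 n_r * P.map ((↑) : ℝ → ℂ)) i j‖ ≤ Cmax (Fin.addNat i 3) j

/-- The objective `g(P) = -∑_{m,j} P_{m,j}` of the relaxed problem (P2). -/
def objG {T : ℕ} (P : Matrix (Fin 3) (Fin T) ℝ) : ℝ := -∑ m, ∑ j, P m j

/-- A `3×3` real permutation matrix. -/
def IsPermMatrix (Pm : Matrix (Fin 3) (Fin 3) ℝ) : Prop :=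
  ∃ σ : Equiv.Perm (Fin 3), Pm = σ.permMatrix ℝ

/-- A `3×3` permutation matrix of a cyclic 3-permutation (a 3-cycle). -/
def IsCyclicPermMatrix (Pm : Matrix (Fin 3) (Fin 3) ℝ) : Prop :=
  ∃ σ : Equiv.Perm (Fin 3), σ.IsThreeCycle ∧ Pm = σ.permMatrix ℝ

lemma ang_mul (x y : ℝ) : ang x * ang y = ang (x + y) := by
  rw [ang, ang, ang, ← Complex.exp_add]
  congr 1
  push_cast
  ring

lemma ang_360 (z : ℝ) : ang (z + 360) = ang z := by
  rw [← ang_mul]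
  have h : ang 360 = 1 := by
    rw [ang, show ((360:ℝ) * Real.pi / 180 : ℂ) * Complex.I = 2 * Real.pi * Complex.I by push_cast; ring, Complex.exp_two_pi_mul_I]
  rw [h, mul_one]

lemma ang_sub_360 (z : ℝ) : ang (z - 360) = ang z := by
  have h := ang_360 (z - 360)
  rw [show z - 360 + 360 = z by ring] at h
  rw [h]

lemma ang_180 (z : ℝ) : ang (z + 180) = -ang z := by
  rw [← ang_mul]
  have h : ang 180 = -1 := by
    rw [ang, show ((180:ℝ) * Real.pi / 180 : ℂ) * Complex.I = Real.pi * Complex.I by push_cast; ring, Complex.exp_pi_mul_I]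
  rw [h, mul_neg_one]

lemma ang_sub_180 (z : ℝ) : ang (z - 180) = -ang z := by
  have h := ang_180 (z - 180)
  rw [show z - 180 + 180 = z by ring] at h
  linear_combination h

lemma ang_add_eq {x y z : ℝ} (h : x + y = z ∨ x + y = z - 360 ∨ x + y = z + 360) :
    ang x * ang y = ang z := by
  rw [ang_mul]
  rcases h with h | h | h
  · rw [h]
  · rw [h, ang_sub_360]
  · rw [h, ang_360]

lemma ang_add_eq_neg {x y z : ℝ} (h : x + y = z + 180 ∨ x + y = z - 180 ∨ x + y = z + 540 ∨ x + y = z - 540) :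
    ang x * ang y = -ang z := by
  rw [ang_mul]
  rcases h with h | h | h | h
  · rw [h, ang_180]
  · rw [h, ang_sub_180]
  · rw [h, show z + 540 = (z + 180) + 360 by ring, ang_360, ang_180]
  · rw [h, show z - 540 = (z - 180) - 360 by ring, ang_sub_360, ang_sub_180]

lemma abs_ang (x : ℝ) : ‖ang x‖ = 1 := by
  rw [ang, Complex.norm_exp]
  norm_num

lemma ang_conj (x : ℝ) : (starRingEnd ℂ) (ang x) = ang (-x) := by
  rw [ang, ang, ← Complex.exp_conj]
  congr 1
  simp only [_root_.map_mul, map_div₀, Complex.conj_ofReal, Complex.conj_I, map_ofNat]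
  push_cast
  ring

lemma abs_eq_of_unit (u : ℝ) (z w : ℂ) (h : z = ang u * w) :
    ‖z‖ = ‖w‖ := by
  rw [h, norm_mul, abs_ang, one_mul]

lemma abs_eq_of_unit_conj (u : ℝ) (z w : ℂ) (h : z = ang u * (starRingEnd ℂ) w) :
    ‖z‖ = ‖w‖ := by
  rw [h, norm_mul, abs_ang, one_mul, Complex.norm_conj]

lemma key_abs {T : ℕ} (n_r : ℝ) (σ : Equiv.Perm (Fin 3)) (P : Matrix (Fin 3) (Fin T) ℝ)
    (i : Fin 3) (j : Fin T) :
    (∃ i1 : Fin 3, ‖(Phi1 * ((P.submatrix σ id).map ((↑) : ℝ → ℂ))) i j‖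
      = ‖(Phi1 * P.map ((↑) : ℝ → ℂ)) i1 j‖) ∧
    (∃ i2 : Fin 3, ‖(Phi2 n_r * ((P.submatrix σ id).map ((↑) : ℝ → ℂ))) i j‖
      = ‖(Phi2 n_r * P.map ((↑) : ℝ → ℂ)) i2 j‖) := by
  have hσ : (σ 0 = 0 ∧ σ 1 = 1 ∧ σ 2 = 2) ∨ (σ 0 = 0 ∧ σ 1 = 2 ∧ σ 2 = 1) ∨ (σ 0 = 1 ∧ σ 1 = 0 ∧ σ 2 = 2) ∨ (σ 0 = 1 ∧ σ 1 = 2 ∧ σ 2 = 0) ∨ (σ 0 = 2 ∧ σ 1 = 0 ∧ σ 2 = 1) ∨ (σ 0 = 2 ∧ σ 1 = 1 ∧ σ 2 = 0) := by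
    have h : ∀ τ : Equiv.Perm (Fin 3), (τ 0 = 0 ∧ τ 1 = 1 ∧ τ 2 = 2) ∨ (τ 0 = 0 ∧ τ 1 = 2 ∧ τ 2 = 1) ∨ (τ 0 = 1 ∧ τ 1 = 0 ∧ τ 2 = 2) ∨ (τ 0 = 1 ∧ τ 1 = 2 ∧ τ 2 = 0) ∨ (τ 0 = 2 ∧ τ 1 = 0 ∧ τ 2 = 1) ∨ (τ 0 = 2 ∧ τ 1 = 1 ∧ τ 2 = 0) := by decide
    exact h σ
  fin_cases i <;> rcases hσ with ⟨h0,h1,h2⟩|⟨h0,h1,h2⟩|⟨h0,h1,h2⟩|⟨h0,h1,h2⟩|⟨h0,h1,h2⟩|⟨h0,h1,h2⟩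
  constructor
  · refine ⟨0, abs_eq_of_unit 0 _ _ ?_⟩
    simp [Phi1, Matrix.mul_apply, Fin.sum_univ_three, h0, h1, h2]
    linear_combination (-1 : ℂ) * ((P 0 j : ℂ)) * ang_add_eq (x := 0) (y := 30) (z := 30) (by norm_num) + (1 : ℂ) * ((P 2 j : ℂ)) * ang_add_eq (x := 0) (y := 150) (z := 150) (by norm_num)
  · refine ⟨0, abs_eq_of_unit 0 _ _ ?_⟩
    simp [Phi2, Matrix.mul_apply, Matrix.smul_apply, smul_eq_mul, Fin.sum_univ_three, h0, h1, h2]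
    linear_combination (-1 : ℂ) * ((n_r : ℂ))⁻¹ * ((P 0 j : ℂ)) * ang_add_eq (x := 0) (y := 30) (z := 30) (by norm_num) + (-1 : ℂ) * ((n_r : ℂ))⁻¹ * ((P 1 j : ℂ)) * ang_add_eq (x := 0) (y := -90) (z := -90) (by norm_num) + (2 : ℂ) * ((n_r : ℂ))⁻¹ * ((P 2 j : ℂ)) * ang_add_eq (x := 0) (y := 150) (z := 150) (by norm_num)
  constructor
  · refine ⟨1, abs_eq_of_unit_conj 240 _ _ ?_⟩
    simp [Phi1, Matrix.mul_apply, Fin.sum_univ_three, h0, h1, h2, _root_.map_add, _root_.map_mul, map_neg, ang_conj, Complex.conj_ofReal]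
    linear_combination (1 : ℂ) * ((P 0 j : ℂ)) * ang_add_eq_neg (x := 240) (y := -30) (z := 30) (by norm_num) + (-1 : ℂ) * ((P 1 j : ℂ)) * ang_add_eq_neg (x := 240) (y := 90) (z := 150) (by norm_num)
  · refine ⟨2, abs_eq_of_unit_conj 60 _ _ ?_⟩
    simp [Phi2, Matrix.mul_apply, Matrix.smul_apply, smul_eq_mul, Fin.sum_univ_three, h0, h1, h2, _root_.map_add, _root_.map_mul, map_neg, map_inv₀, map_ofNat, ang_conj, Complex.conj_ofReal]
    linear_combination (-1 : ℂ) * ((n_r : ℂ))⁻¹ * ((P 0 j : ℂ)) * ang_add_eq (x := 60) (y := -30) (z := 30) (by norm_num) + (2 : ℂ) * ((n_r : ℂ))⁻¹ * ((P 1 j : ℂ)) * ang_add_eq (x := 60) (y := 90) (z := 150) (by norm_num) + (-1 : ℂ) * ((n_r : ℂ))⁻¹ * ((P 2 j : ℂ)) * ang_add_eq (x := 60) (y := -150) (z := -90) (by norm_num)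
  constructor
  · refine ⟨2, abs_eq_of_unit_conj 120 _ _ ?_⟩
    simp [Phi1, Matrix.mul_apply, Fin.sum_univ_three, h0, h1, h2, _root_.map_add, _root_.map_mul, map_neg, ang_conj, Complex.conj_ofReal]
    linear_combination (1 : ℂ) * ((P 1 j : ℂ)) * ang_add_eq_neg (x := 120) (y := 90) (z := 30) (by norm_num) + (-1 : ℂ) * ((P 2 j : ℂ)) * ang_add_eq_neg (x := 120) (y := -150) (z := 150) (by norm_num)
  · refine ⟨0, abs_eq_of_unit_conj 300 _ _ ?_⟩
    simp [Phi2, Matrix.mul_apply, Matrix.smul_apply, smul_eq_mul, Fin.sum_univ_three, h0, h1, h2, _root_.map_add, _root_.map_mul, map_neg, map_inv₀, map_ofNat, ang_conj, Complex.conj_ofReal]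
    linear_combination (-1 : ℂ) * ((n_r : ℂ))⁻¹ * ((P 0 j : ℂ)) * ang_add_eq (x := 300) (y := -30) (z := -90) (by norm_num) + (-1 : ℂ) * ((n_r : ℂ))⁻¹ * ((P 1 j : ℂ)) * ang_add_eq (x := 300) (y := 90) (z := 30) (by norm_num) + (2 : ℂ) * ((n_r : ℂ))⁻¹ * ((P 2 j : ℂ)) * ang_add_eq (x := 300) (y := -150) (z := 150) (by norm_num)
  constructor
  · refine ⟨1, abs_eq_of_unit 120 _ _ ?_⟩
    simp [Phi1, Matrix.mul_apply, Fin.sum_univ_three, h0, h1, h2]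
    linear_combination (1 : ℂ) * ((P 0 j : ℂ)) * ang_add_eq (x := 120) (y := 30) (z := 150) (by norm_num) + (-1 : ℂ) * ((P 1 j : ℂ)) * ang_add_eq (x := 120) (y := -90) (z := 30) (by norm_num)
  · refine ⟨1, abs_eq_of_unit 120 _ _ ?_⟩
    simp [Phi2, Matrix.mul_apply, Matrix.smul_apply, smul_eq_mul, Fin.sum_univ_three, h0, h1, h2]
    linear_combination (2 : ℂ) * ((n_r : ℂ))⁻¹ * ((P 0 j : ℂ)) * ang_add_eq (x := 120) (y := 30) (z := 150) (by norm_num) + (-1 : ℂ) * ((n_r : ℂ))⁻¹ * ((P 1 j : ℂ)) * ang_add_eq (x := 120) (y := -90) (z := 30) (by norm_num) + (-1 : ℂ) * ((n_r : ℂ))⁻¹ * ((P 2 j : ℂ)) * ang_add_eq (x := 120) (y := 150) (z := -90) (by norm_num)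
  constructor
  · refine ⟨2, abs_eq_of_unit 240 _ _ ?_⟩
    simp [Phi1, Matrix.mul_apply, Fin.sum_univ_three, h0, h1, h2]
    linear_combination (1 : ℂ) * ((P 1 j : ℂ)) * ang_add_eq (x := 240) (y := -90) (z := 150) (by norm_num) + (-1 : ℂ) * ((P 2 j : ℂ)) * ang_add_eq (x := 240) (y := 150) (z := 30) (by norm_num)
  · refine ⟨2, abs_eq_of_unit 240 _ _ ?_⟩
    simp [Phi2, Matrix.mul_apply, Matrix.smul_apply, smul_eq_mul, Fin.sum_univ_three, h0, h1, h2]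
    linear_combination (-1 : ℂ) * ((n_r : ℂ))⁻¹ * ((P 0 j : ℂ)) * ang_add_eq (x := 240) (y := 30) (z := -90) (by norm_num) + (2 : ℂ) * ((n_r : ℂ))⁻¹ * ((P 1 j : ℂ)) * ang_add_eq (x := 240) (y := -90) (z := 150) (by norm_num) + (-1 : ℂ) * ((n_r : ℂ))⁻¹ * ((P 2 j : ℂ)) * ang_add_eq (x := 240) (y := 150) (z := 30) (by norm_num)
  constructor
  · refine ⟨0, abs_eq_of_unit_conj 0 _ _ ?_⟩
    simp [Phi1, Matrix.mul_apply, Fin.sum_univ_three, h0, h1, h2, _root_.map_add, _root_.map_mul, map_neg, ang_conj, Complex.conj_ofReal]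
    linear_combination (-1 : ℂ) * ((P 0 j : ℂ)) * ang_add_eq_neg (x := 0) (y := -30) (z := 150) (by norm_num) + (1 : ℂ) * ((P 2 j : ℂ)) * ang_add_eq_neg (x := 0) (y := -150) (z := 30) (by norm_num)
  · refine ⟨1, abs_eq_of_unit_conj 180 _ _ ?_⟩
    simp [Phi2, Matrix.mul_apply, Matrix.smul_apply, smul_eq_mul, Fin.sum_univ_three, h0, h1, h2, _root_.map_add, _root_.map_mul, map_neg, map_inv₀, map_ofNat, ang_conj, Complex.conj_ofReal]
    linear_combination (2 : ℂ) * ((n_r : ℂ))⁻¹ * ((P 0 j : ℂ)) * ang_add_eq (x := 180) (y := -30) (z := 150) (by norm_num) + (-1 : ℂ) * ((n_r : ℂ))⁻¹ * ((P 1 j : ℂ)) * ang_add_eq (x := 180) (y := 90) (z := -90) (by norm_num) + (-1 : ℂ) * ((n_r : ℂ))⁻¹ * ((P 2 j : ℂ)) * ang_add_eq (x := 180) (y := -150) (z := 30) (by norm_num)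
  constructor
  · refine ⟨1, abs_eq_of_unit 0 _ _ ?_⟩
    simp [Phi1, Matrix.mul_apply, Fin.sum_univ_three, h0, h1, h2]
    linear_combination (1 : ℂ) * ((P 0 j : ℂ)) * ang_add_eq (x := 0) (y := 30) (z := 30) (by norm_num) + (-1 : ℂ) * ((P 1 j : ℂ)) * ang_add_eq (x := 0) (y := -90) (z := -90) (by norm_num)
  · refine ⟨1, abs_eq_of_unit 0 _ _ ?_⟩
    simp [Phi2, Matrix.mul_apply, Matrix.smul_apply, smul_eq_mul, Fin.sum_univ_three, h0, h1, h2]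
    linear_combination (2 : ℂ) * ((n_r : ℂ))⁻¹ * ((P 0 j : ℂ)) * ang_add_eq (x := 0) (y := 30) (z := 30) (by norm_num) + (-1 : ℂ) * ((n_r : ℂ))⁻¹ * ((P 1 j : ℂ)) * ang_add_eq (x := 0) (y := -90) (z := -90) (by norm_num) + (-1 : ℂ) * ((n_r : ℂ))⁻¹ * ((P 2 j : ℂ)) * ang_add_eq (x := 0) (y := 150) (z := 150) (by norm_num)
  constructor
  · refine ⟨0, abs_eq_of_unit_conj 240 _ _ ?_⟩
    simp [Phi1, Matrix.mul_apply, Fin.sum_univ_three, h0, h1, h2, _root_.map_add, _root_.map_mul, map_neg, ang_conj, Complex.conj_ofReal]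
    linear_combination (-1 : ℂ) * ((P 0 j : ℂ)) * ang_add_eq_neg (x := 240) (y := -30) (z := 30) (by norm_num) + (1 : ℂ) * ((P 2 j : ℂ)) * ang_add_eq_neg (x := 240) (y := -150) (z := -90) (by norm_num)
  · refine ⟨1, abs_eq_of_unit_conj 60 _ _ ?_⟩
    simp [Phi2, Matrix.mul_apply, Matrix.smul_apply, smul_eq_mul, Fin.sum_univ_three, h0, h1, h2, _root_.map_add, _root_.map_mul, map_neg, map_inv₀, map_ofNat, ang_conj, Complex.conj_ofReal]
    linear_combination (2 : ℂ) * ((n_r : ℂ))⁻¹ * ((P 0 j : ℂ)) * ang_add_eq (x := 60) (y := -30) (z := 30) (by norm_num) + (-1 : ℂ) * ((n_r : ℂ))⁻¹ * ((P 1 j : ℂ)) * ang_add_eq (x := 60) (y := 90) (z := 150) (by norm_num) + (-1 : ℂ) * ((n_r : ℂ))⁻¹ * ((P 2 j : ℂ)) * ang_add_eq (x := 60) (y := -150) (z := -90) (by norm_num)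
  constructor
  · refine ⟨1, abs_eq_of_unit_conj 120 _ _ ?_⟩
    simp [Phi1, Matrix.mul_apply, Fin.sum_univ_three, h0, h1, h2, _root_.map_add, _root_.map_mul, map_neg, ang_conj, Complex.conj_ofReal]
    linear_combination (1 : ℂ) * ((P 0 j : ℂ)) * ang_add_eq_neg (x := 120) (y := -30) (z := -90) (by norm_num) + (-1 : ℂ) * ((P 1 j : ℂ)) * ang_add_eq_neg (x := 120) (y := 90) (z := 30) (by norm_num)
  · refine ⟨2, abs_eq_of_unit_conj 300 _ _ ?_⟩
    simp [Phi2, Matrix.mul_apply, Matrix.smul_apply, smul_eq_mul, Fin.sum_univ_three, h0, h1, h2, _root_.map_add, _root_.map_mul, map_neg, map_inv₀, map_ofNat, ang_conj, Complex.conj_ofReal]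
    linear_combination (-1 : ℂ) * ((n_r : ℂ))⁻¹ * ((P 0 j : ℂ)) * ang_add_eq (x := 300) (y := -30) (z := -90) (by norm_num) + (2 : ℂ) * ((n_r : ℂ))⁻¹ * ((P 1 j : ℂ)) * ang_add_eq (x := 300) (y := 90) (z := 30) (by norm_num) + (-1 : ℂ) * ((n_r : ℂ))⁻¹ * ((P 2 j : ℂ)) * ang_add_eq (x := 300) (y := -150) (z := 150) (by norm_num)
  constructor
  · refine ⟨2, abs_eq_of_unit 120 _ _ ?_⟩
    simp [Phi1, Matrix.mul_apply, Fin.sum_univ_three, h0, h1, h2]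
    linear_combination (1 : ℂ) * ((P 1 j : ℂ)) * ang_add_eq (x := 120) (y := -90) (z := 30) (by norm_num) + (-1 : ℂ) * ((P 2 j : ℂ)) * ang_add_eq (x := 120) (y := 150) (z := -90) (by norm_num)
  · refine ⟨2, abs_eq_of_unit 120 _ _ ?_⟩
    simp [Phi2, Matrix.mul_apply, Matrix.smul_apply, smul_eq_mul, Fin.sum_univ_three, h0, h1, h2]
    linear_combination (-1 : ℂ) * ((n_r : ℂ))⁻¹ * ((P 0 j : ℂ)) * ang_add_eq (x := 120) (y := 30) (z := 150) (by norm_num) + (2 : ℂ) * ((n_r : ℂ))⁻¹ * ((P 1 j : ℂ)) * ang_add_eq (x := 120) (y := -90) (z := 30) (by norm_num) + (-1 : ℂ) * ((n_r : ℂ))⁻¹ * ((P 2 j : ℂ)) * ang_add_eq (x := 120) (y := 150) (z := -90) (by norm_num)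
  constructor
  · refine ⟨0, abs_eq_of_unit 240 _ _ ?_⟩
    simp [Phi1, Matrix.mul_apply, Fin.sum_univ_three, h0, h1, h2]
    linear_combination (-1 : ℂ) * ((P 0 j : ℂ)) * ang_add_eq (x := 240) (y := 30) (z := -90) (by norm_num) + (1 : ℂ) * ((P 2 j : ℂ)) * ang_add_eq (x := 240) (y := 150) (z := 30) (by norm_num)
  · refine ⟨0, abs_eq_of_unit 240 _ _ ?_⟩
    simp [Phi2, Matrix.mul_apply, Matrix.smul_apply, smul_eq_mul, Fin.sum_univ_three, h0, h1, h2]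
    linear_combination (-1 : ℂ) * ((n_r : ℂ))⁻¹ * ((P 0 j : ℂ)) * ang_add_eq (x := 240) (y := 30) (z := -90) (by norm_num) + (-1 : ℂ) * ((n_r : ℂ))⁻¹ * ((P 1 j : ℂ)) * ang_add_eq (x := 240) (y := -90) (z := 150) (by norm_num) + (2 : ℂ) * ((n_r : ℂ))⁻¹ * ((P 2 j : ℂ)) * ang_add_eq (x := 240) (y := 150) (z := 30) (by norm_num)
  constructor
  · refine ⟨2, abs_eq_of_unit_conj 0 _ _ ?_⟩
    simp [Phi1, Matrix.mul_apply, Fin.sum_univ_three, h0, h1, h2, _root_.map_add, _root_.map_mul, map_neg, ang_conj, Complex.conj_ofReal]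
    linear_combination (1 : ℂ) * ((P 1 j : ℂ)) * ang_add_eq_neg (x := 0) (y := 90) (z := -90) (by norm_num) + (-1 : ℂ) * ((P 2 j : ℂ)) * ang_add_eq_neg (x := 0) (y := -150) (z := 30) (by norm_num)
  · refine ⟨0, abs_eq_of_unit_conj 180 _ _ ?_⟩
    simp [Phi2, Matrix.mul_apply, Matrix.smul_apply, smul_eq_mul, Fin.sum_univ_three, h0, h1, h2, _root_.map_add, _root_.map_mul, map_neg, map_inv₀, map_ofNat, ang_conj, Complex.conj_ofReal]
    linear_combination (-1 : ℂ) * ((n_r : ℂ))⁻¹ * ((P 0 j : ℂ)) * ang_add_eq (x := 180) (y := -30) (z := 150) (by norm_num) + (-1 : ℂ) * ((n_r : ℂ))⁻¹ * ((P 1 j : ℂ)) * ang_add_eq (x := 180) (y := 90) (z := -90) (by norm_num) + (2 : ℂ) * ((n_r : ℂ))⁻¹ * ((P 2 j : ℂ)) * ang_add_eq (x := 180) (y := -150) (z := 30) (by norm_num)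
  constructor
  · refine ⟨2, abs_eq_of_unit 0 _ _ ?_⟩
    simp [Phi1, Matrix.mul_apply, Fin.sum_univ_three, h0, h1, h2]
    linear_combination (1 : ℂ) * ((P 1 j : ℂ)) * ang_add_eq (x := 0) (y := -90) (z := -90) (by norm_num) + (-1 : ℂ) * ((P 2 j : ℂ)) * ang_add_eq (x := 0) (y := 150) (z := 150) (by norm_num)
  · refine ⟨2, abs_eq_of_unit 0 _ _ ?_⟩
    simp [Phi2, Matrix.mul_apply, Matrix.smul_apply, smul_eq_mul, Fin.sum_univ_three, h0, h1, h2]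
    linear_combination (-1 : ℂ) * ((n_r : ℂ))⁻¹ * ((P 0 j : ℂ)) * ang_add_eq (x := 0) (y := 30) (z := 30) (by norm_num) + (2 : ℂ) * ((n_r : ℂ))⁻¹ * ((P 1 j : ℂ)) * ang_add_eq (x := 0) (y := -90) (z := -90) (by norm_num) + (-1 : ℂ) * ((n_r : ℂ))⁻¹ * ((P 2 j : ℂ)) * ang_add_eq (x := 0) (y := 150) (z := 150) (by norm_num)
  constructor
  · refine ⟨2, abs_eq_of_unit_conj 240 _ _ ?_⟩
    simp [Phi1, Matrix.mul_apply, Fin.sum_univ_three, h0, h1, h2, _root_.map_add, _root_.map_mul, map_neg, ang_conj, Complex.conj_ofReal]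
    linear_combination (1 : ℂ) * ((P 1 j : ℂ)) * ang_add_eq_neg (x := 240) (y := 90) (z := 150) (by norm_num) + (-1 : ℂ) * ((P 2 j : ℂ)) * ang_add_eq_neg (x := 240) (y := -150) (z := -90) (by norm_num)
  · refine ⟨0, abs_eq_of_unit_conj 60 _ _ ?_⟩
    simp [Phi2, Matrix.mul_apply, Matrix.smul_apply, smul_eq_mul, Fin.sum_univ_three, h0, h1, h2, _root_.map_add, _root_.map_mul, map_neg, map_inv₀, map_ofNat, ang_conj, Complex.conj_ofReal]
    linear_combination (-1 : ℂ) * ((n_r : ℂ))⁻¹ * ((P 0 j : ℂ)) * ang_add_eq (x := 60) (y := -30) (z := 30) (by norm_num) + (-1 : ℂ) * ((n_r : ℂ))⁻¹ * ((P 1 j : ℂ)) * ang_add_eq (x := 60) (y := 90) (z := 150) (by norm_num) + (2 : ℂ) * ((n_r : ℂ))⁻¹ * ((P 2 j : ℂ)) * ang_add_eq (x := 60) (y := -150) (z := -90) (by norm_num)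
  constructor
  · refine ⟨0, abs_eq_of_unit_conj 120 _ _ ?_⟩
    simp [Phi1, Matrix.mul_apply, Fin.sum_univ_three, h0, h1, h2, _root_.map_add, _root_.map_mul, map_neg, ang_conj, Complex.conj_ofReal]
    linear_combination (-1 : ℂ) * ((P 0 j : ℂ)) * ang_add_eq_neg (x := 120) (y := -30) (z := -90) (by norm_num) + (1 : ℂ) * ((P 2 j : ℂ)) * ang_add_eq_neg (x := 120) (y := -150) (z := 150) (by norm_num)
  · refine ⟨1, abs_eq_of_unit_conj 300 _ _ ?_⟩
    simp [Phi2, Matrix.mul_apply, Matrix.smul_apply, smul_eq_mul, Fin.sum_univ_three, h0, h1, h2, _root_.map_add, _root_.map_mul, map_neg, map_inv₀, map_ofNat, ang_conj, Complex.conj_ofReal]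
    linear_combination (2 : ℂ) * ((n_r : ℂ))⁻¹ * ((P 0 j : ℂ)) * ang_add_eq (x := 300) (y := -30) (z := -90) (by norm_num) + (-1 : ℂ) * ((n_r : ℂ))⁻¹ * ((P 1 j : ℂ)) * ang_add_eq (x := 300) (y := 90) (z := 30) (by norm_num) + (-1 : ℂ) * ((n_r : ℂ))⁻¹ * ((P 2 j : ℂ)) * ang_add_eq (x := 300) (y := -150) (z := 150) (by norm_num)
  constructor
  · refine ⟨0, abs_eq_of_unit 120 _ _ ?_⟩
    simp [Phi1, Matrix.mul_apply, Fin.sum_univ_three, h0, h1, h2]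
    linear_combination (-1 : ℂ) * ((P 0 j : ℂ)) * ang_add_eq (x := 120) (y := 30) (z := 150) (by norm_num) + (1 : ℂ) * ((P 2 j : ℂ)) * ang_add_eq (x := 120) (y := 150) (z := -90) (by norm_num)
  · refine ⟨0, abs_eq_of_unit 120 _ _ ?_⟩
    simp [Phi2, Matrix.mul_apply, Matrix.smul_apply, smul_eq_mul, Fin.sum_univ_three, h0, h1, h2]
    linear_combination (-1 : ℂ) * ((n_r : ℂ))⁻¹ * ((P 0 j : ℂ)) * ang_add_eq (x := 120) (y := 30) (z := 150) (by norm_num) + (-1 : ℂ) * ((n_r : ℂ))⁻¹ * ((P 1 j : ℂ)) * ang_add_eq (x := 120) (y := -90) (z := 30) (by norm_num) + (2 : ℂ) * ((n_r : ℂ))⁻¹ * ((P 2 j : ℂ)) * ang_add_eq (x := 120) (y := 150) (z := -90) (by norm_num)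
  constructor
  · refine ⟨1, abs_eq_of_unit 240 _ _ ?_⟩
    simp [Phi1, Matrix.mul_apply, Fin.sum_univ_three, h0, h1, h2]
    linear_combination (1 : ℂ) * ((P 0 j : ℂ)) * ang_add_eq (x := 240) (y := 30) (z := -90) (by norm_num) + (-1 : ℂ) * ((P 1 j : ℂ)) * ang_add_eq (x := 240) (y := -90) (z := 150) (by norm_num)
  · refine ⟨1, abs_eq_of_unit 240 _ _ ?_⟩
    simp [Phi2, Matrix.mul_apply, Matrix.smul_apply, smul_eq_mul, Fin.sum_univ_three, h0, h1, h2]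
    linear_combination (2 : ℂ) * ((n_r : ℂ))⁻¹ * ((P 0 j : ℂ)) * ang_add_eq (x := 240) (y := 30) (z := -90) (by norm_num) + (-1 : ℂ) * ((n_r : ℂ))⁻¹ * ((P 1 j : ℂ)) * ang_add_eq (x := 240) (y := -90) (z := 150) (by norm_num) + (-1 : ℂ) * ((n_r : ℂ))⁻¹ * ((P 2 j : ℂ)) * ang_add_eq (x := 240) (y := 150) (z := 30) (by norm_num)
  constructor
  · refine ⟨1, abs_eq_of_unit_conj 0 _ _ ?_⟩
    simp [Phi1, Matrix.mul_apply, Fin.sum_univ_three, h0, h1, h2, _root_.map_add, _root_.map_mul, map_neg, ang_conj, Complex.conj_ofReal]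
    linear_combination (1 : ℂ) * ((P 0 j : ℂ)) * ang_add_eq_neg (x := 0) (y := -30) (z := 150) (by norm_num) + (-1 : ℂ) * ((P 1 j : ℂ)) * ang_add_eq_neg (x := 0) (y := 90) (z := -90) (by norm_num)
  · refine ⟨2, abs_eq_of_unit_conj 180 _ _ ?_⟩
    simp [Phi2, Matrix.mul_apply, Matrix.smul_apply, smul_eq_mul, Fin.sum_univ_three, h0, h1, h2, _root_.map_add, _root_.map_mul, map_neg, map_inv₀, map_ofNat, ang_conj, Complex.conj_ofReal]
    linear_combination (-1 : ℂ) * ((n_r : ℂ))⁻¹ * ((P 0 j : ℂ)) * ang_add_eq (x := 180) (y := -30) (z := 150) (by norm_num) + (2 : ℂ) * ((n_r : ℂ))⁻¹ * ((P 1 j : ℂ)) * ang_add_eq (x := 180) (y := 90) (z := -90) (by norm_num) + (-1 : ℂ) * ((n_r : ℂ))⁻¹ * ((P 2 j : ℂ)) * ang_add_eq (x := 180) (y := -150) (z := 30) (by norm_num)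


lemma perm_mul_eq {N : ℕ} (σ : Equiv.Perm (Fin 3)) (X : Matrix (Fin 3) (Fin N) ℝ) :
    σ.permMatrix ℝ * X = X.submatrix σ id :=
  PEquiv.toMatrix_toPEquiv_mul σ X

lemma feas_perm {N T : ℕ} (r_max Δ n_r : ℝ) (E : Matrix (Fin N) (Fin T) ℝ)
    (e : Fin N → ℝ) (Cmax : Matrix (Fin 6) (Fin T) ℝ)
    (hCblock1 : ∀ (i i' : Fin 3) (j : Fin T),
      Cmax (Fin.castAdd 3 i) j = Cmax (Fin.castAdd 3 i') j)
    (hCblock2 : ∀ (i i' : Fin 3) (j : Fin T),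
      Cmax (Fin.addNat i 3) j = Cmax (Fin.addNat i' 3) j)
    (σ : Equiv.Perm (Fin 3)) (X : Matrix (Fin 3) (Fin N) ℝ) (A : Matrix (Fin N) (Fin T) ℝ)
    (h : feasibleP1 r_max Δ n_r E e Cmax X A) :
    feasibleP1 r_max Δ n_r E e Cmax (σ.permMatrix ℝ * X) A := by
  obtain ⟨⟨hX01, hXsum⟩, hCr, hCd, hSoc⟩ := h
  rw [perm_mul_eq]
  refine ⟨⟨fun m i => hX01 (σ m) i, fun i => ?_⟩, hCr, hCd, ?_⟩
  · have := Equiv.sum_comp σ (fun m => X m i)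
    simpa using this.trans (hXsum i)
  · intro i j
    have hmul : (X.submatrix ⇑σ id) * A = ((X * A).submatrix ⇑σ id) := by
      ext a b
      simp [Matrix.mul_apply]
    rw [hmul]
    obtain ⟨⟨i1, e1⟩, ⟨i2, e2⟩⟩ := key_abs n_r σ (X * A) i j
    constructor
    · rw [e1, hCblock1 i i1 j]
      exact (hSoc i1 j).1
    · rw [e2, hCblock2 i i2 j]
      exact (hSoc i2 j).2

lemma cyclic_ne {N : ℕ} (hN : 1 ≤ N) (X : Matrix (Fin 3) (Fin N) ℝ) (hX : memX X)
    (σ : Equiv.Perm (Fin 3)) (hσ : σ.IsThreeCycle) : σ.permMatrix ℝ * X ≠ X := by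
  rw [perm_mul_eq]
  intro h
  obtain ⟨hX01, hXsum⟩ := hX
  set i0 : Fin N := ⟨0, hN⟩ with hi0
  have hex : ∃ m, X m i0 = 1 := by
    by_contra hc
    push_neg at hc
    have hz : ∀ m, X m i0 = 0 := fun m => (hX01 m i0).resolve_right (hc m)
    have hs := hXsum i0
    rw [Finset.sum_eq_zero (fun m _ => hz m)] at hs
    norm_num at hs
  obtain ⟨m0, hm0⟩ := hex
  have hfix : σ m0 ≠ m0 := by
    have hcard := hσ.card_support
    have huniv : σ.support = Finset.univ :=
      Finset.eq_univ_of_card _ (by simp [hcard])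
    have hm : m0 ∈ σ.support := huniv ▸ Finset.mem_univ m0
    exact Equiv.Perm.mem_support.mp hm
  have h2 : X (σ m0) i0 = 1 := by
    have hh := congrFun (congrFun h m0) i0
    rw [Matrix.submatrix_apply, id_eq] at hh
    rw [hh, hm0]
  have hle : (∑ m ∈ ({m0, σ m0} : Finset (Fin 3)), X m i0) ≤ ∑ m, X m i0 := by
    apply Finset.sum_le_sum_of_subset_of_nonneg (Finset.subset_univ _)
    intro m _ _
    rcases hX01 m i0 with hh | hh <;> rw [hh] <;> norm_num
  rw [Finset.sum_pair hfix.symm, hm0, h2, hXsum i0] at hle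
  linarith

lemma rot_three_cycle : (finRotate 3).IsThreeCycle :=
  card_support_eq_three_iff.mp (by decide)

/-- If `C_max` is block-constant (first three rows equal, last three
rows equal) and `(X*, A*)` is optimal for (P1), then for every permutation matrix `Π`
the pair `(ΠX*, A*)` is also feasible and optimal; moreover, for `N ≥ 1` and `Π` a
cyclic 3-permutation, `ΠX* ≠ X*`, so (P1) has at least two distinct optimal
solutions. -/
theorem stmt4 (N T : ℕ) (hN : 1 ≤ N) (hT : 0 < T)
    (r_max Δ n_r : ℝ) (hr : 0 < r_max) (hΔ : 0 < Δ) (hn : 0 < n_r)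
    (E : Matrix (Fin N) (Fin T) ℝ) (hE : ∀ i j, E i j = 0 ∨ E i j = 1)
    (e : Fin N → ℝ) (he : ∀ i, 0 ≤ e i)
    (Cmax : Matrix (Fin 6) (Fin T) ℝ) (hC : ∀ i j, 0 ≤ Cmax i j)
    (hCblock1 : ∀ (i i' : Fin 3) (j : Fin T),
      Cmax (Fin.castAdd 3 i) j = Cmax (Fin.castAdd 3 i') j)
    (hCblock2 : ∀ (i i' : Fin 3) (j : Fin T),
      Cmax (Fin.addNat i 3) j = Cmax (Fin.addNat i' 3) j)
    (Xs : Matrix (Fin 3) (Fin N) ℝ) (As : Matrix (Fin N) (Fin T) ℝ)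
    (hfeas : feasibleP1 r_max Δ n_r E e Cmax Xs As)
    (hopt : ∀ X A, feasibleP1 r_max Δ n_r E e Cmax X A → objF As ≤ objF A) :
    (∀ Pm : Matrix (Fin 3) (Fin 3) ℝ, IsPermMatrix Pm →
      feasibleP1 r_max Δ n_r E e Cmax (Pm * Xs) As ∧
      ∀ X A, feasibleP1 r_max Δ n_r E e Cmax X A → objF As ≤ objF A) ∧
    (∀ Pm : Matrix (Fin 3) (Fin 3) ℝ, IsCyclicPermMatrix Pm → Pm * Xs ≠ Xs) ∧
    (∃ (X₁ : Matrix (Fin 3) (Fin N) ℝ) (A₁ : Matrix (Fin N) (Fin T) ℝ)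
       (X₂ : Matrix (Fin 3) (Fin N) ℝ) (A₂ : Matrix (Fin N) (Fin T) ℝ),
      feasibleP1 r_max Δ n_r E e Cmax X₁ A₁ ∧
      (∀ X A, feasibleP1 r_max Δ n_r E e Cmax X A → objF A₁ ≤ objF A) ∧
      feasibleP1 r_max Δ n_r E e Cmax X₂ A₂ ∧
      (∀ X A, feasibleP1 r_max Δ n_r E e Cmax X A → objF A₂ ≤ objF A) ∧
      (X₁, A₁) ≠ (X₂, A₂))  := by
  refine ⟨?_, ?_, ?_⟩
  · intro Pm hPm
    obtain ⟨σ, rfl⟩ := hPm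
    exact ⟨feas_perm r_max Δ n_r E e Cmax hCblock1 hCblock2 σ Xs As hfeas, hopt⟩
  · intro Pm hPm h
    obtain ⟨σ, hσ3, rfl⟩ := hPm
    exact cyclic_ne hN Xs hfeas.1 σ hσ3 h
  · refine ⟨Xs, As, (finRotate 3).permMatrix ℝ * Xs, As, hfeas, hopt,
      feas_perm r_max Δ n_r E e Cmax hCblock1 hCblock2 _ Xs As hfeas, hopt, ?_⟩
    intro h
    have hfst : Xs = (finRotate 3).permMatrix ℝ * Xs := congrArg Prod.fst h
    exact cyclic_ne hN Xs hfeas.1 _ rot_three_cycle hfst.symm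
end

section
/- If (X, A) is feasible for problem (P1), then the aggregated phase power matrix P := XA is feasible for the relaxed problem (P2) with M = I_T and W = r_max·E; that is, P ≥ 0 entrywise, P ≤ r_max·(XE) entrywise, and |(Φ₁P)_{i,j}| ≤ C_max(i,j), |(Φ₂P)_{i,j}| ≤ C_max(i+3,j) for all i ∈ {1,2,3}, j. Moreover g(XA) = f(A), and consequently the optimal value of (P2) is at most the optimal value of (P1): p₂* ≤ p₁*. -/
open Matrix Complex

/-- If `(X, A)` is feasible for (P1), then `P := XA` is feasible for
the relaxed problem (P2) with `M = I_T`, `W = r_max·E`, with `g(XA) = f(A)`; and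
consequently `p₂* ≤ p₁*`. -/
theorem stmt6 (N T : ℕ) (hN : 0 < N) (hT : 0 < T)
    (r_max Δ n_r : ℝ) (hr : 0 < r_max) (hΔ : 0 < Δ) (hn : 0 < n_r)
    (E : Matrix (Fin N) (Fin T) ℝ) (hE : ∀ i j, E i j = 0 ∨ E i j = 1)
    (e : Fin N → ℝ) (he : ∀ i, 0 ≤ e i)
    (Cmax : Matrix (Fin 6) (Fin T) ℝ) (hC : ∀ i j, 0 ≤ Cmax i j) :
    (∀ (X : Matrix (Fin 3) (Fin N) ℝ) (A : Matrix (Fin N) (Fin T) ℝ),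
      feasibleP1 r_max Δ n_r E e Cmax X A →
        feasibleP2 r_max n_r E Cmax X (X * A) ∧ objG (X * A) = objF A) ∧
    sInf {v : ℝ | ∃ (X : Matrix (Fin 3) (Fin N) ℝ) (P : Matrix (Fin 3) (Fin T) ℝ),
        feasibleP2 r_max n_r E Cmax X P ∧ v = objG P}
      ≤ sInf {v : ℝ | ∃ (X : Matrix (Fin 3) (Fin N) ℝ) (A : Matrix (Fin N) (Fin T) ℝ),
        feasibleP1 r_max Δ n_r E e Cmax X A ∧ v = objF A} := by
  have key : ∀ (X : Matrix (Fin 3) (Fin N) ℝ) (A : Matrix (Fin N) (Fin T) ℝ),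
      feasibleP1 r_max Δ n_r E e Cmax X A →
        feasibleP2 r_max n_r E Cmax X (X * A) ∧ objG (X * A) = objF A := by
    rintro X A ⟨hX, hCr, hCd, hsoc⟩
    have hXnn : ∀ m i, 0 ≤ X m i := by
      intro m i; rcases hX.1 m i with h | h <;> simp [h]
    constructor
    · refine ⟨hX, ?_, ?_, hsoc⟩
      · intro m j
        simp only [Matrix.mul_apply]
        exact Finset.sum_nonneg fun i _ => mul_nonneg (hXnn m i) (hCr i j).1
      · intro m j
        simp only [Matrix.mul_apply, Finset.mul_sum]
        refine Finset.sum_le_sum fun i _ => ?_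
        calc X m i * A i j ≤ X m i * (r_max * E i j) :=
              mul_le_mul_of_nonneg_left (hCr i j).2 (hXnn m i)
          _ = r_max * (X m i * E i j) := by ring
    · unfold objG objF
      congr 1
      refine Finset.sum_comm.trans ?_
      rw [show (∑ i, ∑ j, A i j) = ∑ j, ∑ i, A i j from Finset.sum_comm]
      refine Finset.sum_congr rfl fun j _ => ?_
      simp only [Matrix.mul_apply]
      rw [Finset.sum_comm]
      refine Finset.sum_congr rfl fun i _ => ?_
      rw [← Finset.sum_mul, hX.2 i, one_mul]
  refine ⟨key, ?_⟩
  set S2 := {v : ℝ | ∃ (X : Matrix (Fin 3) (Fin N) ℝ) (P : Matrix (Fin 3) (Fin T) ℝ),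
        feasibleP2 r_max n_r E Cmax X P ∧ v = objG P} with hS2
  set S1 := {v : ℝ | ∃ (X : Matrix (Fin 3) (Fin N) ℝ) (A : Matrix (Fin N) (Fin T) ℝ),
        feasibleP1 r_max Δ n_r E e Cmax X A ∧ v = objF A} with hS1
  have hEnn : ∀ i j, 0 ≤ E i j := by
    intro i j; rcases hE i j with h | h <;> simp [h]
  have hsub : S1 ⊆ S2 := by
    rintro v ⟨X, A, hfeas, rfl⟩
    exact ⟨X, X * A, (key X A hfeas).1, ((key X A hfeas).2).symm⟩
  have hne : S1.Nonempty := by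
    refine ⟨objF (0 : Matrix (Fin N) (Fin T) ℝ),
      Matrix.of fun m i => if m = 0 then (1:ℝ) else 0, 0, ⟨⟨?_, ?_⟩, ?_, ?_, ?_⟩, rfl⟩
    · intro m i
      by_cases h : m = 0 <;> simp [Matrix.of_apply, h]
    · intro i
      simp [Matrix.of_apply, Fin.sum_univ_three]
    · intro i j
      exact ⟨le_refl 0, mul_nonneg hr.le (hEnn i j)⟩
    · intro i
      simpa using he i
    · intro i j
      simp only [Matrix.mul_zero, Matrix.map_zero Complex.ofReal Complex.ofReal_zero,
        Matrix.zero_apply, map_zero, norm_zero]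
      exact ⟨hC _ _, hC _ _⟩
  have hbdd : BddBelow S2 := by
    refine ⟨-(3 * (T * (r_max * N))), ?_⟩
    rintro v ⟨X, P, ⟨hX, hPnn, hPle, _⟩, rfl⟩
    have hX1 : ∀ m i, X m i ≤ 1 := by
      intro m i; rcases hX.1 m i with h | h <;> simp [h]
    have hXnn : ∀ m i, 0 ≤ X m i := by
      intro m i; rcases hX.1 m i with h | h <;> simp [h]
    have hbound : ∀ m j, P m j ≤ r_max * N := by
      intro m j
      refine (hPle m j).trans ?_
      refine mul_le_mul_of_nonneg_left ?_ hr.le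
      simp only [Matrix.mul_apply]
      have hE1 : ∀ i (j : Fin T), E i j ≤ 1 := by
        intro i j; rcases hE i j with h | h <;> simp [h]
      calc (∑ i, X m i * E i j) ≤ ∑ _i : Fin N, (1:ℝ) := by
            refine Finset.sum_le_sum fun i _ => ?_
            calc X m i * E i j ≤ 1 * 1 :=
                  mul_le_mul (hX1 m i) (hE1 i j) (hEnn i j) one_pos.le
              _ = 1 := one_mul 1
        _ = (N : ℝ) := by simp
    unfold objG
    rw [neg_le_neg_iff]
    calc (∑ m, ∑ j, P m j) ≤ ∑ _m : Fin 3, ∑ _j : Fin T, r_max * N := by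
          exact Finset.sum_le_sum fun m _ => Finset.sum_le_sum fun j _ => hbound m j
      _ = 3 * (T * (r_max * N)) := by simp [Finset.sum_const, mul_comm, mul_assoc]
  exact csInf_le_csInf hbdd hne hsub
end

section
/- Let X ∈ 𝒳 and let P ∈ ℝ^{3×T} satisfy 0 ≤ P and P ≤ r_max·(XE) entrywise. Then there exists a charging matrix A ∈ ℝ^{N×T} with 0 ≤ A_{i,j} ≤ r_max·E_{i,j} for all i, j (i.e., A ∈ C_r) such that XA = P. (Such an A can be obtained by splitting P_{m,j} equally among the EVs assigned to phase m that are present at time j.) -/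
open Matrix Complex

/-- For `X ∈ 𝒳` and `0 ≤ P ≤ r_max·(XE)` entrywise, there is a
charging matrix `A ∈ C_r` with `XA = P`. -/
theorem stmt7 (N T : ℕ) (hN : 0 < N) (hT : 0 < T)
    (r_max : ℝ) (hr : 0 < r_max)
    (E : Matrix (Fin N) (Fin T) ℝ) (hE : ∀ i j, E i j = 0 ∨ E i j = 1)
    (X : Matrix (Fin 3) (Fin N) ℝ) (hX : memX X)
    (P : Matrix (Fin 3) (Fin T) ℝ) (hP0 : ∀ m j, 0 ≤ P m j)
    (hPle : ∀ m j, P m j ≤ r_max * (X * E) m j) :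
    ∃ A : Matrix (Fin N) (Fin T) ℝ, memCr r_max E A ∧ X * A = P := by
  classical
  set s : Fin 3 → Fin T → ℝ := fun m j => ∑ i, X m i * E i j with hs
  have hXnn : ∀ m i, (0:ℝ) ≤ X m i := fun m i => by
    rcases hX.1 m i with h | h <;> simp [h]
  have hEnn : ∀ i j, (0:ℝ) ≤ E i j := fun i j => by
    rcases hE i j with h | h <;> simp [h]
  have hsnn : ∀ m j, 0 ≤ s m j := fun m j =>
    Finset.sum_nonneg fun i _ => mul_nonneg (hXnn m i) (hEnn i j)
  have hXE : ∀ m j, (X * E) m j = s m j := fun m j => by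
    rw [Matrix.mul_apply]
  have hPz : ∀ m j, s m j = 0 → P m j = 0 := by
    intro m j h
    have h1 := hPle m j
    rw [hXE, h, mul_zero] at h1
    exact le_antisymm h1 (hP0 m j)
  set q : Fin 3 → Fin T → ℝ := fun m j => P m j / s m j with hq
  have hq0 : ∀ m j, 0 ≤ q m j := fun m j => div_nonneg (hP0 m j) (hsnn m j)
  have hqle : ∀ m j, q m j ≤ r_max := by
    intro m j
    rcases eq_or_lt_of_le (hsnn m j) with h | h
    · simp [hq, ← h, hr.le]
    · rw [hq, div_le_iff₀ h]
      have := hPle m j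
      rwa [hXE] at this
  have hsq : ∀ m j, s m j * q m j = P m j := by
    intro m j
    rcases eq_or_lt_of_le (hsnn m j) with h | h
    · rw [← h, zero_mul, hPz m j h.symm]
    · rw [hq]
      field_simp
  refine ⟨fun i j => ∑ m, X m i * (E i j * q m j), ?_, ?_⟩
  · intro i j
    constructor
    · exact Finset.sum_nonneg fun m _ =>
        mul_nonneg (hXnn m i) (mul_nonneg (hEnn i j) (hq0 m j))
    · calc ∑ m, X m i * (E i j * q m j)
          ≤ ∑ m, X m i * (E i j * r_max) :=
            Finset.sum_le_sum fun m _ =>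
              mul_le_mul_of_nonneg_left
                (mul_le_mul_of_nonneg_left (hqle m j) (hEnn i j)) (hXnn m i)
        _ = (∑ m, X m i) * (E i j * r_max) := (Finset.sum_mul _ _ _).symm
        _ = r_max * E i j := by rw [hX.2 i]; ring
  · ext m j
    show ∑ i, X m i * ∑ m', X m' i * (E i j * q m' j) = P m j
    have orth : ∀ m' i, X m i * X m' i = if m = m' then X m i else 0 := by
      intro m' i
      by_cases h : m = m'
      · subst h
        simp only [if_pos rfl]
        rcases hX.1 m i with h1 | h1 <;> simp [h1]
      · simp only [if_neg h]
        rcases hX.1 m i with h1 | h1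
        · simp [h1]
        rcases hX.1 m' i with h2 | h2
        · simp [h2]
        exfalso
        have hsub : ({m, m'} : Finset (Fin 3)) ⊆ Finset.univ := Finset.subset_univ _
        have h2le : (2:ℝ) ≤ ∑ k, X k i := by
          have := Finset.sum_le_sum_of_subset_of_nonneg hsub
            (fun k _ _ => hXnn k i)
          rw [Finset.sum_pair h, h1, h2] at this; linarith
        rw [hX.2 i] at h2le
        norm_num at h2le
    calc ∑ i, X m i * ∑ m', X m' i * (E i j * q m' j)
        = ∑ i, ∑ m', X m i * X m' i * (E i j * q m' j) := by
          refine Finset.sum_congr rfl fun i _ => ?_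
          rw [Finset.mul_sum]
          exact Finset.sum_congr rfl fun m' _ => by ring
      _ = ∑ m', ∑ i, X m i * X m' i * (E i j * q m' j) := Finset.sum_comm
      _ = ∑ m', if m = m' then ∑ i, X m i * (E i j * q m j) else 0 := by
          refine Finset.sum_congr rfl fun m' _ => ?_
          by_cases h : m = m'
          · subst h
            simp only [if_pos rfl]
            exact Finset.sum_congr rfl fun i _ => by rw [orth m i, if_pos rfl]
          · simp only [if_neg h]
            refine Finset.sum_eq_zero fun i _ => ?_
            rw [orth m' i, if_neg h, zero_mul]
      _ = ∑ i, X m i * (E i j * q m j) := by rw [Finset.sum_ite_eq Finset.univ m]; simp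
      _ = s m j * q m j := by
          rw [Finset.sum_mul]
          exact Finset.sum_congr rfl fun i _ => by ring
      _ = P m j := hsq m j
end

section
/- (Global optimality in the zero-laxity case.) Assume the zero-laxity condition r_max·Δ_T·Σ_{j=1}^T E_{i,j} = e_i for every i. If (X, P*) is an optimal solution of the relaxed problem (P2) with M = I_T and W = r_max·E, then there exists A ∈ ℝ^{N×T} with XA = P* such that (X, A) is feasible for problem (P1) and f(A) = p₁*; in particular X is an optimal phase-selection matrix for (P1), i.e., X ∈ 𝒳*. -/
open Matrix Complex

lemma memX_nonneg {N : ℕ} {X : Matrix (Fin 3) (Fin N) ℝ} (hX : memX X) (m : Fin 3) (i : Fin N) :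
    0 ≤ X m i := by rcases hX.1 m i with h | h <;> simp [h]

lemma memX_orth {N : ℕ} {X : Matrix (Fin 3) (Fin N) ℝ} (hX : memX X) (i : Fin N)
    {m m' : Fin 3} (h : m ≠ m') : X m i * X m' i = 0 := by
  rcases hX.1 m i with h1 | h1
  · simp [h1]
  rcases hX.1 m' i with h2 | h2
  · simp [h2]
  exfalso
  have hle : X m i + X m' i ≤ ∑ k, X k i := by
    have := Finset.sum_le_sum_of_subset_of_nonneg
      (Finset.subset_univ ({m, m'} : Finset (Fin 3)))
      (fun k _ _ => memX_nonneg hX k i)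
    rwa [Finset.sum_pair h] at this
  rw [hX.2 i, h1, h2] at hle
  linarith

lemma sum_mulX {N T : ℕ} {X : Matrix (Fin 3) (Fin N) ℝ} (hX : memX X)
    (A : Matrix (Fin N) (Fin T) ℝ) :
    ∑ m, ∑ j, (X * A) m j = ∑ i, ∑ j, A i j := by
  simp only [Matrix.mul_apply]
  have h1 : ∀ j : Fin T, ∑ m, ∑ i, X m i * A i j = ∑ i, A i j := by
    intro j
    rw [Finset.sum_comm]
    refine Finset.sum_congr rfl fun i _ => ?_
    rw [← Finset.sum_mul, hX.2 i, one_mul]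
  calc ∑ m, ∑ j, ∑ i, X m i * A i j = ∑ j, ∑ m, ∑ i, X m i * A i j := Finset.sum_comm
    _ = ∑ j, ∑ i, A i j := Finset.sum_congr rfl fun j _ => h1 j
    _ = ∑ i, ∑ j, A i j := Finset.sum_comm

lemma feasP1_to_P2 {N T : ℕ} {r_max Δ n_r : ℝ} (hr : 0 ≤ r_max)
    {E : Matrix (Fin N) (Fin T) ℝ} {e : Fin N → ℝ} {Cmax : Matrix (Fin 6) (Fin T) ℝ}
    {X : Matrix (Fin 3) (Fin N) ℝ} {A : Matrix (Fin N) (Fin T) ℝ}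
    (h : feasibleP1 r_max Δ n_r E e Cmax X A) :
    feasibleP2 r_max n_r E Cmax X (X * A) := by
  obtain ⟨hX, hCr, hCd, hsoc⟩ := h
  refine ⟨hX, ?_, ?_, hsoc⟩
  · intro m j
    rw [Matrix.mul_apply]
    exact Finset.sum_nonneg fun i _ => mul_nonneg (memX_nonneg hX m i) (hCr i j).1
  · intro m j
    simp only [Matrix.mul_apply, Finset.mul_sum]
    refine Finset.sum_le_sum fun i _ => ?_
    calc X m i * A i j ≤ X m i * (r_max * E i j) :=
          mul_le_mul_of_nonneg_left (hCr i j).2 (memX_nonneg hX m i)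
      _ = r_max * (X m i * E i j) := by ring

/-- **Global optimality in the zero-laxity case.** Under zero laxity,
if `(X, P*)` is optimal for the relaxed problem (P2) with `M = I_T`, `W = r_max·E`,
then there is `A` with `XA = P*` such that `(X, A)` is feasible for (P1) and
`f(A) = p₁*`; in particular `X ∈ 𝒳*`. -/
theorem stmt8 (N T : ℕ) (hN : 0 < N) (hT : 0 < T)
    (r_max Δ n_r : ℝ) (hr : 0 < r_max) (hΔ : 0 < Δ) (hn : 0 < n_r)
    (E : Matrix (Fin N) (Fin T) ℝ) (hE : ∀ i j, E i j = 0 ∨ E i j = 1)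
    (e : Fin N → ℝ) (he : ∀ i, 0 ≤ e i)
    (Cmax : Matrix (Fin 6) (Fin T) ℝ) (hC : ∀ i j, 0 ≤ Cmax i j)
    (hzl : ∀ i, r_max * Δ * (∑ j, E i j) = e i)
    (X : Matrix (Fin 3) (Fin N) ℝ) (Ps : Matrix (Fin 3) (Fin T) ℝ)
    (hfeas2 : feasibleP2 r_max n_r E Cmax X Ps)
    (hopt2 : ∀ (X' : Matrix (Fin 3) (Fin N) ℝ) (P' : Matrix (Fin 3) (Fin T) ℝ),
      feasibleP2 r_max n_r E Cmax X' P' → objG Ps ≤ objG P') :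
    ∃ A : Matrix (Fin N) (Fin T) ℝ, X * A = Ps ∧
      feasibleP1 r_max Δ n_r E e Cmax X A ∧
      (∀ (X' : Matrix (Fin 3) (Fin N) ℝ) (A' : Matrix (Fin N) (Fin T) ℝ),
        feasibleP1 r_max Δ n_r E e Cmax X' A' → objF A ≤ objF A') ∧
      objF A = sInf {v : ℝ | ∃ (X' : Matrix (Fin 3) (Fin N) ℝ)
          (A' : Matrix (Fin N) (Fin T) ℝ),
        feasibleP1 r_max Δ n_r E e Cmax X' A' ∧ v = objF A'} := by
  obtain ⟨hX, hPs0, hPsE, hsoc⟩ := hfeas2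
  have hE0 : ∀ i j, 0 ≤ E i j := fun i j => by rcases hE i j with h | h <;> simp [h]
  have hXE0 : ∀ m j, 0 ≤ (X * E) m j := by
    intro m j
    rw [Matrix.mul_apply]
    exact Finset.sum_nonneg fun i _ => mul_nonneg (memX_nonneg hX m i) (hE0 i j)
  set c : Fin 3 → Fin T → ℝ := fun m j =>
    if (X * E) m j = 0 then 0 else Ps m j / ((X * E) m j) with hc
  have hc0 : ∀ m j, 0 ≤ c m j := by
    intro m j
    by_cases h : (X * E) m j = 0
    · simp [hc, h]
    · simp only [hc, h, if_false]
      exact div_nonneg (hPs0 m j) (hXE0 m j)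
  have hcr : ∀ m j, c m j ≤ r_max := by
    intro m j
    by_cases h : (X * E) m j = 0
    · simp [hc, h, hr.le]
    · simp only [hc, h, if_false]
      rw [div_le_iff₀ (lt_of_le_of_ne (hXE0 m j) (Ne.symm h))]
      exact hPsE m j
  have hcmul : ∀ m j, c m j * (X * E) m j = Ps m j := by
    intro m j
    by_cases h : (X * E) m j = 0
    · have h1 := hPsE m j
      rw [h, mul_zero] at h1
      have h2 := hPs0 m j
      simp [hc, h]
      linarith
    · simp only [hc, h, if_false]
      rw [div_mul_cancel₀ _ h]
  set A : Matrix (Fin N) (Fin T) ℝ := fun i j => (∑ m, X m i * c m j) * E i j with hA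
  have key : ∀ (m : Fin 3) (i : Fin N) (j : Fin T),
      X m i * (∑ m', X m' i * c m' j) = X m i * c m j := by
    intro m i j
    rw [Finset.mul_sum, Finset.sum_eq_single m]
    · rcases hX.1 m i with h | h <;> simp [h]
    · intro b _ hb
      rw [← mul_assoc, memX_orth hX i (Ne.symm hb), zero_mul]
    · simp
  have hXA : X * A = Ps := by
    ext m j
    show ∑ i, X m i * ((∑ m', X m' i * c m' j) * E i j) = Ps m j
    calc ∑ i, X m i * ((∑ m', X m' i * c m' j) * E i j)
        = ∑ i, c m j * (X m i * E i j) := by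
          refine Finset.sum_congr rfl fun i _ => ?_
          calc X m i * ((∑ m', X m' i * c m' j) * E i j)
              = (X m i * (∑ m', X m' i * c m' j)) * E i j := by ring
            _ = (X m i * c m j) * E i j := by rw [key m i j]
            _ = c m j * (X m i * E i j) := by ring
      _ = c m j * ∑ i, X m i * E i j := (Finset.mul_sum _ _ _).symm
      _ = c m j * (X * E) m j := by rw [Matrix.mul_apply]
      _ = Ps m j := hcmul m j
  have hCrA : memCr r_max E A := by
    intro i j
    constructor
    · exact mul_nonneg (Finset.sum_nonneg fun m _ =>
        mul_nonneg (memX_nonneg hX m i) (hc0 m j)) (hE0 i j)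
    · have hs : ∑ m, X m i * c m j ≤ r_max := by
        calc ∑ m, X m i * c m j ≤ ∑ m, X m i * r_max :=
              Finset.sum_le_sum fun m _ =>
                mul_le_mul_of_nonneg_left (hcr m j) (memX_nonneg hX m i)
          _ = r_max := by rw [← Finset.sum_mul, hX.2 i, one_mul]
      exact mul_le_mul_of_nonneg_right hs (hE0 i j)
  have hCdA : memCd Δ e A := by
    intro i
    calc Δ * ∑ j, A i j ≤ Δ * ∑ j, r_max * E i j := by
          refine mul_le_mul_of_nonneg_left ?_ hΔ.le
          exact Finset.sum_le_sum fun j _ => (hCrA i j).2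
      _ = r_max * Δ * ∑ j, E i j := by rw [← Finset.mul_sum]; ring
      _ = e i := hzl i
  have hsocA : memCsoc n_r Cmax X A := by
    intro i j
    rw [hXA]
    exact hsoc i j
  have hfeas1 : feasibleP1 r_max Δ n_r E e Cmax X A := ⟨hX, hCrA, hCdA, hsocA⟩
  have hobjeq : objF A = objG Ps := by
    rw [objF, objG, ← hXA, sum_mulX hX A]
  have hopt1 : ∀ (X' : Matrix (Fin 3) (Fin N) ℝ) (A' : Matrix (Fin N) (Fin T) ℝ),
      feasibleP1 r_max Δ n_r E e Cmax X' A' → objF A ≤ objF A' := by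
    intro X' A' hf
    have h2 := hopt2 X' (X' * A') (feasP1_to_P2 hr.le hf)
    have h3 : objG (X' * A') = objF A' := by
      rw [objG, objF, sum_mulX hf.1 A']
    rw [hobjeq]
    rw [h3] at h2
    exact h2
  refine ⟨A, hXA, hfeas1, hopt1, ?_⟩
  have hlst : IsLeast {v : ℝ | ∃ (X' : Matrix (Fin 3) (Fin N) ℝ)
      (A' : Matrix (Fin N) (Fin T) ℝ),
      feasibleP1 r_max Δ n_r E e Cmax X' A' ∧ v = objF A'} (objF A) := by
    constructor
    · exact ⟨X, A, hfeas1, rfl⟩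
    · rintro v ⟨X', A', hf, rfl⟩
      exact hopt1 X' A' hf
  exact hlst.csInf_eq.symm
end

section
/- Let X ∈ 𝒳 and A ∈ C_r ∩ C_d. Then for every phase index m ∈ {1,2,3} and every nonempty subset S ⊆ {1,…,T} of time steps, the aggregated power satisfies Σ_{j∈S} (XA)_{m,j} ≤ Σ_{i=1}^N X_{m,i} · min( r_max·Σ_{j∈S} E_{i,j} , e_i/Δ_T ). (Thus every feasible pair of problem (P1) satisfies all of the subset-selection constraints P·M_𝒯 ≤ X·W₃ of the set 𝒫₃ with P = XA.) -/
open Matrix Complex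

/-- For `X ∈ 𝒳` and `A ∈ C_r ∩ C_d`, every subset-selection
constraint of `𝒫₃` holds for `P = XA`: for each phase `m` and nonempty
`S ⊆ {1,…,T}`, `∑_{j∈S} (XA)_{m,j} ≤ ∑_i X_{m,i} · min(r_max·∑_{j∈S} E_{i,j}, e_i/Δ_T)`. -/
theorem stmt10 (N T : ℕ) (hN : 0 < N) (hT : 0 < T)
    (r_max Δ : ℝ) (hr : 0 < r_max) (hΔ : 0 < Δ)
    (E : Matrix (Fin N) (Fin T) ℝ) (hE : ∀ i j, E i j = 0 ∨ E i j = 1)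
    (e : Fin N → ℝ) (he : ∀ i, 0 ≤ e i)
    (X : Matrix (Fin 3) (Fin N) ℝ) (hX : memX X)
    (A : Matrix (Fin N) (Fin T) ℝ) (hAr : memCr r_max E A) (hAd : memCd Δ e A) :
    ∀ (m : Fin 3) (S : Finset (Fin T)), S.Nonempty →
      (∑ j ∈ S, (X * A) m j)
        ≤ ∑ i, X m i * min (r_max * ∑ j ∈ S, E i j) (e i / Δ) := by
  intro m S _
  have key : (∑ j ∈ S, (X * A) m j) = ∑ i, X m i * ∑ j ∈ S, A i j := by
    simp only [Matrix.mul_apply, Finset.mul_sum]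
    rw [Finset.sum_comm]
  rw [key]
  apply Finset.sum_le_sum
  intro i _
  have hXnn : 0 ≤ X m i := by rcases hX.1 m i with h | h <;> simp [h]
  apply mul_le_mul_of_nonneg_left _ hXnn
  apply le_min
  · calc ∑ j ∈ S, A i j ≤ ∑ j ∈ S, r_max * E i j :=
          Finset.sum_le_sum (fun j _ => (hAr i j).2)
      _ = r_max * ∑ j ∈ S, E i j := by rw [Finset.mul_sum]
  · have h1 : ∑ j ∈ S, A i j ≤ ∑ j, A i j := by
      apply Finset.sum_le_sum_of_subset_of_nonneg (Finset.subset_univ S)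
      intro j _ _; exact (hAr i j).1
    have h2 : ∑ j, A i j ≤ e i / Δ := by
      rw [le_div_iff₀ hΔ, mul_comm]; exact hAd i
    linarith
end

section
/- Assume the zero-laxity condition r_max·Δ_T·Σ_{j=1}^T E_{i,j} = e_i for every i, and assume problem (P1) satisfies full demand, i.e., there exists a feasible (X, A) ∈ S with f(A) = −Σ_{i=1}^N e_i/Δ_T (equivalently p₁*·Δ_T = −Σ_i e_i). Then the continuous relaxation of problem (P2) with M = I_T and W = r_max·E — minimizing g(P) over fractional X' ∈ [0,1]^{3×N} with unit column sums and P ∈ ℝ^{3×T} with 0 ≤ P ≤ r_max·(X'E) and |(Φ₁P)_{i,j}| ≤ C_max(i,j), |(Φ₂P)_{i,j}| ≤ C_max(i+3,j) — has optimal value exactly p₁* = −Σ_i e_i/Δ_T, and this optimum is attained at an integral point: the pair (X, XA) with X ∈ 𝒳. -/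
open Matrix Complex

/-- Feasibility in the continuous relaxation of (P2) (with `M = I_T`, `W = r_max·E`):
the binary `X ∈ 𝒳` is replaced by a fractional `X' ∈ [0,1]^{3×N}` with unit column
sums. -/
def feasibleP2frac {N T : ℕ} (r_max n_r : ℝ) (E : Matrix (Fin N) (Fin T) ℝ)
    (Cmax : Matrix (Fin 6) (Fin T) ℝ)
    (X' : Matrix (Fin 3) (Fin N) ℝ) (P : Matrix (Fin 3) (Fin T) ℝ) : Prop :=
  (∀ m i, 0 ≤ X' m i ∧ X' m i ≤ 1) ∧ (∀ i, (∑ m, X' m i) = 1) ∧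
  (∀ m j, 0 ≤ P m j) ∧ (∀ m j, P m j ≤ r_max * (X' * E) m j) ∧
  ∀ (i : Fin 3) (j : Fin T),
    ‖(Phi1 * P.map ((↑) : ℝ → ℂ)) i j‖ ≤ Cmax (Fin.castAdd 3 i) j ∧
    ‖(Phi2 n_r * P.map ((↑) : ℝ → ℂ)) i j‖ ≤ Cmax (Fin.addNat i 3) j

/-- Under zero laxity, if (P1) satisfies full demand (some feasible
`(X, A)` has `f(A) = −∑_i e_i/Δ_T`, i.e. `p₁*·Δ_T = −∑_i e_i`), then the continuous
relaxation of (P2) has optimal value exactly `p₁* = −∑_i e_i/Δ_T`, and this optimum is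
attained at the integral point `(X, XA)` with `X ∈ 𝒳`. -/
theorem stmt13 (N T : ℕ) (hN : 0 < N) (hT : 0 < T)
    (r_max Δ n_r : ℝ) (hr : 0 < r_max) (hΔ : 0 < Δ) (hn : 0 < n_r)
    (E : Matrix (Fin N) (Fin T) ℝ) (hE : ∀ i j, E i j = 0 ∨ E i j = 1)
    (e : Fin N → ℝ) (he : ∀ i, 0 ≤ e i)
    (Cmax : Matrix (Fin 6) (Fin T) ℝ) (hC : ∀ i j, 0 ≤ Cmax i j)
    (hzl : ∀ i, r_max * Δ * (∑ j, E i j) = e i)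
    (hfull : ∃ (X : Matrix (Fin 3) (Fin N) ℝ) (A : Matrix (Fin N) (Fin T) ℝ),
      feasibleP1 r_max Δ n_r E e Cmax X A ∧ objF A = -(∑ i, e i / Δ)) :
    sInf {v : ℝ | ∃ (X' : Matrix (Fin 3) (Fin N) ℝ) (P : Matrix (Fin 3) (Fin T) ℝ),
        feasibleP2frac r_max n_r E Cmax X' P ∧ v = objG P}
      = -(∑ i, e i / Δ) ∧
    sInf {v : ℝ | ∃ (X : Matrix (Fin 3) (Fin N) ℝ) (A : Matrix (Fin N) (Fin T) ℝ),
        feasibleP1 r_max Δ n_r E e Cmax X A ∧ v = objF A}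
      = -(∑ i, e i / Δ) ∧
    ∀ (X : Matrix (Fin 3) (Fin N) ℝ) (A : Matrix (Fin N) (Fin T) ℝ),
      feasibleP1 r_max Δ n_r E e Cmax X A → objF A = -(∑ i, e i / Δ) →
        feasibleP2frac r_max n_r E Cmax X (X * A) ∧ objG (X * A) = -(∑ i, e i / Δ) := by
  have hkey : ∀ i, e i / Δ = r_max * ∑ j, E i j := by
    intro i
    rw [← hzl i]
    field_simp
  -- generic: for a matrix B with column-sum-1 X', ∑_{m,j} (X'B) = ∑_{i,j} B
  have hsumXB : ∀ (X' : Matrix (Fin 3) (Fin N) ℝ), (∀ i, (∑ m, X' m i) = 1) →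
      ∀ (B : Matrix (Fin N) (Fin T) ℝ), ∑ m, ∑ j, (X' * B) m j = ∑ i, ∑ j, B i j := by
    intro X' hX2 B
    simp only [Matrix.mul_apply]
    calc ∑ m, ∑ j, ∑ i, X' m i * B i j
        = ∑ j, ∑ i, ∑ m, X' m i * B i j := by
          rw [Finset.sum_comm]
          exact Finset.sum_congr rfl fun j _ => Finset.sum_comm
      _ = ∑ j, ∑ i, B i j := by
          refine Finset.sum_congr rfl fun j _ => Finset.sum_congr rfl fun i _ => ?_
          rw [← Finset.sum_mul, hX2 i, one_mul]
      _ = ∑ i, ∑ j, B i j := Finset.sum_comm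
  -- lower bound for P2frac
  have hlb2 : ∀ (X' : Matrix (Fin 3) (Fin N) ℝ) (P : Matrix (Fin 3) (Fin T) ℝ),
      feasibleP2frac r_max n_r E Cmax X' P → -(∑ i, e i / Δ) ≤ objG P := by
    rintro X' P ⟨hX1, hX2, hP0, hPle, _⟩
    have h1 : ∑ m, ∑ j, P m j ≤ ∑ m, ∑ j, r_max * (X' * E) m j :=
      Finset.sum_le_sum fun m _ => Finset.sum_le_sum fun j _ => hPle m j
    have h2 : ∑ m, ∑ j, r_max * (X' * E) m j = ∑ i, e i / Δ := by
      have := hsumXB X' hX2 E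
      simp only [← Finset.mul_sum, this, hkey]
    simp only [objG]
    linarith
  -- lower bound for P1
  have hlb1 : ∀ (X : Matrix (Fin 3) (Fin N) ℝ) (A : Matrix (Fin N) (Fin T) ℝ),
      feasibleP1 r_max Δ n_r E e Cmax X A → -(∑ i, e i / Δ) ≤ objF A := by
    rintro X A ⟨hX, hCr, hCd, hsoc⟩
    have h1 : ∑ i, ∑ j, A i j ≤ ∑ i, e i / Δ := by
      refine Finset.sum_le_sum fun i _ => ?_
      rw [le_div_iff₀ hΔ, mul_comm]
      exact hCd i
    simp only [objF]
    linarith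
  -- transfer lemma
  have htrans : ∀ (X : Matrix (Fin 3) (Fin N) ℝ) (A : Matrix (Fin N) (Fin T) ℝ),
      feasibleP1 r_max Δ n_r E e Cmax X A →
        feasibleP2frac r_max n_r E Cmax X (X * A) ∧ objG (X * A) = objF A := by
    rintro X A ⟨⟨hX1, hX2⟩, hCr, hCd, hsoc⟩
    have hX01 : ∀ m i, 0 ≤ X m i ∧ X m i ≤ 1 := by
      intro m i
      rcases hX1 m i with h | h <;> rw [h] <;> norm_num
    refine ⟨⟨hX01, hX2, ?_, ?_, hsoc⟩, ?_⟩
    · intro m j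
      simp only [Matrix.mul_apply]
      exact Finset.sum_nonneg fun i _ => mul_nonneg (hX01 m i).1 (hCr i j).1
    · intro m j
      simp only [Matrix.mul_apply, Finset.mul_sum]
      refine Finset.sum_le_sum fun i _ => ?_
      calc X m i * A i j ≤ X m i * (r_max * E i j) :=
            mul_le_mul_of_nonneg_left (hCr i j).2 (hX01 m i).1
        _ = r_max * (X m i * E i j) := by ring
    · simp only [objG, objF, hsumXB X hX2 A]
  obtain ⟨X₀, A₀, hfeas₀, hval₀⟩ := hfull
  obtain ⟨hf2₀, hg₀⟩ := htrans X₀ A₀ hfeas₀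
  refine ⟨?_, ?_, fun X A hfeas hval => ⟨(htrans X A hfeas).1, (htrans X A hfeas).2.trans hval⟩⟩
  · apply le_antisymm
    · exact csInf_le ⟨_, fun v ⟨X', P, hf, hv⟩ => hv ▸ hlb2 X' P hf⟩
        ⟨X₀, X₀ * A₀, hf2₀, (hg₀.trans hval₀).symm⟩
    · exact le_csInf ⟨_, X₀, X₀ * A₀, hf2₀, rfl⟩
        (fun v ⟨X', P, hf, hv⟩ => hv ▸ hlb2 X' P hf)
  · apply le_antisymm
    · exact csInf_le ⟨_, fun v ⟨X, A, hf, hv⟩ => hv ▸ hlb1 X A hf⟩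
        ⟨X₀, A₀, hfeas₀, hval₀.symm⟩
    · exact le_csInf ⟨_, X₀, A₀, hfeas₀, rfl⟩
        (fun v ⟨X, A, hf, hv⟩ => hv ▸ hlb1 X A hf)
end
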